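/- Every subquandle of the conjugation quandle Conj(G) of a group G is isomorphic, as a quandle, to a Dehn quandle; specifically, if Q is a subquandle of Conj(G) and ⟨Q⟩ is the subgroup of G generated by the underlying set of Q, then Q is isomorphic to the Dehn quandle D(Q^{⟨Q⟩}). -/
import Mathlib


/-- The set of all conjugates of elements of `S` in `G`. -/
def conjSet (G : Type*) [Group G] (S : Set G) : Set G :=
  {x | ∃ s ∈ S, ∃ g : G, x = g * s * g⁻¹}

theorem conjSet.conj_mem {G : Type*} [Group G] {S : Set G} {x : G}
    (hx : x ∈ conjSet G S) (g : G) : g * x * g⁻¹ ∈ conjSet G S := by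
  obtain ⟨s, hs, h, rfl⟩ := hx
  exact ⟨s, hs, g * h, by group⟩

/-- The Dehn quandle operation `x * y = y x y⁻¹` on the set of conjugates of `S`. -/
def dehnOp {G : Type*} [Group G] {S : Set G} (x y : conjSet G S) : conjSet G S :=
  ⟨(y : G) * (x : G) * (y : G)⁻¹, conjSet.conj_mem x.2 (y : G)⟩

lemma closure_conj_mem {G : Type*} [Group G] {Q : Set G}
    (hQ : ∀ x ∈ Q, ∀ y ∈ Q, y * x * y⁻¹ ∈ Q ∧ y⁻¹ * x * y ∈ Q)
    {g : G} (hg : g ∈ Subgroup.closure Q) {a : G} (ha : a ∈ Q) :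
    g * a * g⁻¹ ∈ Q := by
  have H : ∀ b ∈ Q, g * b * g⁻¹ ∈ Q ∧ g⁻¹ * b * g ∈ Q := by
    refine Subgroup.closure_induction (fun y hy b hb => ?_) (by simp) ?_ ?_ hg
    · exact ⟨(hQ b hb y hy).1, (hQ b hb y hy).2⟩
    · intro x y _ _ hx hy b hb
      constructor
      · have := (hx (y * b * y⁻¹) (hy b hb).1).1
        simpa [mul_assoc] using this
      · have := (hy (x⁻¹ * b * x) (hx b hb).2).2
        simpa [mul_assoc] using this
    · intro x _ hx b hb
      exact ⟨by simpa using (hx b hb).2, by simpa using (hx b hb).1⟩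
  exact (H a ha).1

/-- Every subquandle `Q` of `Conj G` is isomorphic, as a quandle, to the Dehn quandle
`D(Q^{⟨Q⟩})` of the subgroup generated by `Q` with respect to `Q`. -/
theorem subquandle_isomorphic_dehn_quandle (G : Type*) [Group G] (Q : Set G)
    (hQ : ∀ x ∈ Q, ∀ y ∈ Q, y * x * y⁻¹ ∈ Q ∧ y⁻¹ * x * y ∈ Q) :
    ∃ f : Q → {x : G | ∃ a ∈ Q, ∃ g ∈ Subgroup.closure Q, x = g * a * g⁻¹},
      Function.Bijective f ∧
      ∀ x y : Q,
        (f ⟨(y : G) * (x : G) * (y : G)⁻¹, (hQ x.1 x.2 y.1 y.2).1⟩ : G) =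
          (f y : G) * (f x : G) * (f y : G)⁻¹ := by
  refine ⟨fun x => ⟨x, x.1, x.2, 1, one_mem _, by group⟩, ⟨?_, ?_⟩, fun x y => rfl⟩
  · intro a b h
    simpa [Subtype.ext_iff] using h
  · rintro ⟨x, a, ha, g, hg, rfl⟩
    exact ⟨⟨_, closure_conj_mem hQ hg ha⟩, rfl⟩
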